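/- For δ > 0, the function t ↦ Re f(√δ + t ± it) = δ + 2√δ·t + (1/2)·log(1 − 4√δ·t + 8t²δ + 4t⁴ + 8√δ·t³) is nondecreasing on [0, ∞), with strict increase for t > 0. -/

import Mathlib

/-- For `δ > 0`, the map
`t ↦ Re f(√δ + t ± it) = δ + 2√δ t + (1/2) log(1 − 4√δ t + 8t²δ + 4t⁴ + 8√δ t³)`
is nondecreasing on `[0, ∞)`, with strict increase for `t > 0`. -/
theorem phase_along_diagonal_contour_increasing (δ : ℝ) (hδ : 0 < δ) :
    MonotoneOn
      (fun t : ℝ => δ + 2 * Real.sqrt δ * t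
        + (1 / 2) * Real.log (1 - 4 * Real.sqrt δ * t + 8 * t ^ 2 * δ
            + 4 * t ^ 4 + 8 * Real.sqrt δ * t ^ 3))
      (Set.Ici (0 : ℝ)) ∧
    StrictMonoOn
      (fun t : ℝ => δ + 2 * Real.sqrt δ * t
        + (1 / 2) * Real.log (1 - 4 * Real.sqrt δ * t + 8 * t ^ 2 * δ
            + 4 * t ^ 4 + 8 * Real.sqrt δ * t ^ 3))
      (Set.Ioi (0 : ℝ)) := by
  set s := Real.sqrt δ with hs_def
  have hs : 0 < s := Real.sqrt_pos.mpr hδ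
  have hsδ : s ^ 2 = δ := Real.sq_sqrt hδ.le
  set f : ℝ → ℝ := fun t =>
    δ + 2 * s * t + (1 / 2) * Real.log (1 - 4 * s * t + 8 * t ^ 2 * δ
      + 4 * t ^ 4 + 8 * s * t ^ 3) with hf_def
  set Q : ℝ → ℝ := fun t => 1 - 4 * s * t + 8 * t ^ 2 * δ + 4 * t ^ 4 + 8 * s * t ^ 3
    with hQ_def
  have hQpos : ∀ t : ℝ, 0 < Q t := by
    intro t
    have key : Q t = (1 - 2 * s * t) ^ 2 + (2 * t * (s + t)) ^ 2 := by
      simp only [hQ_def, ← hsδ]; ring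
    rcases eq_or_ne t 0 with rfl | ht
    · simp [hQ_def]
    · have h2 : (2 * t * (s + t)) ^ 2 > 0 ∨ (1 - 2 * s * t) ^ 2 > 0 := by
        rcases eq_or_ne (s + t) 0 with hst | hst
        · right
          have ht' : t = -s := by linarith [hst]
          have : 1 - 2 * s * t = 1 + 2 * s ^ 2 := by rw [ht']; ring
          rw [this]; positivity
        · left; positivity
      rcases h2 with h2 | h2 <;> nlinarith [sq_nonneg (1 - 2 * s * t), sq_nonneg (2 * t * (s + t))]
  have hderiv : ∀ t : ℝ, HasDerivAt f
      ((2 * s * Q t + (1 / 2) * (-(4 * s) + 16 * t * δ + 16 * t ^ 3 + 24 * s * t ^ 2)) / Q t) t := by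
    intro t
    have hQ' : HasDerivAt Q (-(4 * s) + 16 * t * δ + 16 * t ^ 3 + 24 * s * t ^ 2) t := by
      have := (((((hasDerivAt_const t (1 : ℝ)).sub (((hasDerivAt_id t).const_mul (4 * s)))).add
        (((hasDerivAt_pow 2 t).const_mul 8).mul_const δ)).add
        ((hasDerivAt_pow 4 t).const_mul 4)).add
        ((hasDerivAt_pow 3 t).const_mul (8 * s)))
      refine this.congr_deriv ?_
      push_cast; ring
    have hlog := hQ'.log (hQpos t).ne'
    have hlin : HasDerivAt (fun t : ℝ => δ + 2 * s * t) (2 * s) t := by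
      simpa using ((hasDerivAt_id t).const_mul (2 * s)).const_add δ
    have := hlin.add (hlog.const_mul (1 / 2))
    refine this.congr_deriv ?_
    field_simp [(hQpos t).ne']
  have hderiv_pos : ∀ t ∈ Set.Ioi (0 : ℝ),
      0 < (2 * s * Q t + (1 / 2) * (-(4 * s) + 16 * t * δ + 16 * t ^ 3 + 24 * s * t ^ 2)) / Q t := by
    intro t ht
    simp only [Set.mem_Ioi] at ht
    apply div_pos _ (hQpos t)
    have hnum : 2 * s * Q t + (1 / 2) * (-(4 * s) + 16 * t * δ + 16 * t ^ 3 + 24 * s * t ^ 2)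
        = 4 * t ^ 2 * (4 * s ^ 3 + 4 * s ^ 2 * t + 2 * s * t ^ 2 + 3 * s + 2 * t) := by
      simp only [hQ_def, ← hsδ]; ring
    rw [hnum]
    positivity
  have hstrict : StrictMonoOn f (Set.Ici (0 : ℝ)) := by
    apply strictMonoOn_of_deriv_pos (convex_Ici 0)
    · exact fun t _ => ((hderiv t).continuousAt).continuousWithinAt
    · intro t ht
      rw [interior_Ici] at ht
      rw [(hderiv t).deriv]
      exact hderiv_pos t ht
  exact ⟨hstrict.monotoneOn, hstrict.mono Set.Ioi_subset_Ici_self⟩
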